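/- Let $x_1 \geq x_2 \geq \dots \geq x_n$ be real numbers with distinct values, $c > 0$, and suppose for all $i$ that $|\psi_i|^2 := c\prod_{j\neq i}\frac{x_i - x_j + c}{x_i - x_j} \geq 0$ where $\psi$ satisfies $\prod_j(x_i - x_j + c) = |\psi_i|^2 \prod_{j\neq i}(x_i - x_j)$. Then $x_i - x_{i+1} \geq c$ for all $i = 1,\dots,n-1$; moreover $x_k - x_{k+1} = c$ if and only if $|\psi_{k+1}|^2 = 0$. -/
import Mathlib


open Finset in
theorem gap_conditions_iff_psi_sq_nonneg (n : ℕ) (x : Fin n → ℝ) (hmono : StrictAnti x)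
    (c : ℝ) (hc : 0 < c)
    (ψsq : Fin n → ℝ)
    (hψ : ∀ i, ψsq i = c * ∏ j ∈ univ.erase i, (x i - x j + c) / (x i - x j))
    (hnonneg : ∀ i, 0 ≤ ψsq i) :
    ∀ i j : Fin n, (i : ℕ) + 1 = (j : ℕ) →
      x i - x j ≥ c ∧ (x i - x j = c ↔ ψsq j = 0) := by
  have key : ∀ m : ℕ, ∀ i j : Fin n, (i : ℕ) + 1 = (j : ℕ) → (j : ℕ) ≤ m →
      c ≤ x i - x j ∧ (x i - x j = c ↔ ψsq j = 0) := by
    intro m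
    induction m with
    | zero => intro i j hij hj; omega
    | succ m ih =>
      intro i j hij hjm
      have hij' : i < j := by rw [Fin.lt_def]; omega
      have hine : i ≠ j := ne_of_lt hij'
      have hg : 0 < x i - x j := sub_pos.mpr (hmono hij')
      set S : Finset (Fin n) := (univ.erase j).erase i with hS
      have hiMem : i ∈ univ.erase j := by simp [hine]
      have hpos : ∀ k ∈ S, 0 < (x j - x k + c) / (x j - x k) := by
        intro k hk
        rw [hS, Finset.mem_erase, Finset.mem_erase] at hk
        obtain ⟨hki, hkj, -⟩ := hk
        rcases lt_or_gt_of_ne hkj with hlt | hgt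
        · -- k < j, k ≠ i, so (k:ℕ) < i
          have hkn : (k : ℕ) < i := by
            have : (k : ℕ) < j := hlt
            have : (k : ℕ) ≠ i := fun h => hki (Fin.ext h)
            omega
          have hk1 : (k : ℕ) + 1 < n := by
            have := i.isLt; omega
          set l : Fin n := ⟨(k : ℕ) + 1, hk1⟩ with hl
          have hli : (l : ℕ) ≤ (i : ℕ) := by simp [hl]; omega
          have hlm : (l : ℕ) ≤ m := by simp [hl]; omega
          obtain ⟨hgap, -⟩ := ih k l rfl hlm
          have hxl : x i ≤ x l := hmono.antitone (by rw [Fin.le_def]; exact hli)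
          -- numerator < 0 : x j - x k + c = (x j - x l) + (x l - x k) + c
          have hnum : x j - x k + c < 0 := by
            have h1 : x j < x l := lt_of_lt_of_le (hmono hij') hxl
            nlinarith
          have hden : x j - x k < 0 := by
            have := hmono hlt; linarith
          exact div_pos_of_neg_of_neg hnum hden
        · -- j < k
          have hden : 0 < x j - x k := sub_pos.mpr (hmono hgt)
          exact div_pos (by linarith) hden
      have hF : 0 < ∏ k ∈ S, (x j - x k + c) / (x j - x k) := Finset.prod_pos hpos
      have hsplit : ψsq j =
          c * ((x j - x i + c) / (x j - x i) * ∏ k ∈ S, (x j - x k + c) / (x j - x k)) := by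
        rw [hψ j, ← Finset.mul_prod_erase _ _ hiMem]
      set g : ℝ := x i - x j with hgdef
      have hxji : x j - x i = -g := by rw [hgdef]; ring
      set F : ℝ := ∏ k ∈ S, (x j - x k + c) / (x j - x k) with hFdef
      have hr : 0 ≤ (x j - x i + c) / (x j - x i) := by
        have h0 := hnonneg j
        rw [hsplit] at h0
        nlinarith [mul_pos hc hF]
      have hgne : -g ≠ 0 := by
        intro h; rw [hgdef] at h; nlinarith
      have hcg : c ≤ g := by
        rw [hxji] at hr
        by_contra hcon
        push_neg at hcon
        have hnum : 0 < -g + c := by linarith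
        have : (-g + c) / (-g) < 0 := div_neg_of_pos_of_neg hnum (by linarith)
        linarith
      refine ⟨hcg, ?_, ?_⟩
      · intro heq
        rw [hsplit, hxji]
        have : -g + c = 0 := by rw [hgdef] at *; linarith
        rw [this]
        simp
      · intro h0
        rw [hsplit] at h0
        rcases mul_eq_zero.mp h0 with h | h
        · linarith
        rcases mul_eq_zero.mp h with h | h
        · rw [hxji] at h
          rcases div_eq_zero_iff.mp h with h | h
          · rw [hgdef] at h ⊢; linarith
          · exact absurd h hgne
        · exact absurd h (ne_of_gt hF)
  intro i j hij
  exact key (j : ℕ) i j hij le_rfl
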